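/- Fix integers B ≥ 1 and 1 ≤ k ≤ B. Let A be any advice set and model a deterministic ski-rental algorithm with advice as a map j : A → ℕ⁺ ∪ {∞}, where on advice φ the algorithm rents on days 1,…,j(φ)−1 and buys at the start of day j(φ) (never buying if j(φ)=∞); its cost on an instance with D ≥ 1 skiing days is cost(φ,D) = D if D < j(φ), and (j(φ)−1)+B otherwise. Let adv : ℕ⁺ → A be any (trusted) advice function. If for every integer D ≥ 1 the trusted cost satisfies cost(adv(D),D) ≤ (1+(k−1)/B)·min(D,B), then there exist an integer D ≥ 1 and an advice value φ ∈ A such that cost(φ,D) ≥ (1+(B−1)/k)·min(D,B). That is, any algorithm with trusted competitive ratio at most 1+(k−1)/B has untrusted competitive ratio at least 1+(B−1)/k. -/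

import Mathlib

/-- any deterministic ski-rental algorithm with advice (of any size)
whose trusted competitive ratio is at most `1 + (k-1)/B` has untrusted competitive
ratio at least `1 + (B-1)/k`. -/
theorem ski_rental_pareto_lower_bound (B k : ℕ) (hB : 1 ≤ B) (hk1 : 1 ≤ k) (hkB : k ≤ B)
    (A : Type*) (j : A → ℕ∞) (hj : ∀ φ : A, 1 ≤ j φ)
    (cost : A → ℕ → ℝ)
    (hcost_rent : ∀ (φ : A) (D : ℕ), (D : ℕ∞) < j φ → cost φ D = (D : ℝ))
    (hcost_buy : ∀ (φ : A) (D n : ℕ), j φ = (n : ℕ∞) → n ≤ D →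
      cost φ D = ((n : ℝ) - 1) + (B : ℝ))
    (adv : ℕ → A)
    (htrusted : ∀ D : ℕ, 1 ≤ D →
      cost (adv D) D ≤ (1 + ((k : ℝ) - 1) / (B : ℝ)) * min (D : ℝ) (B : ℝ)) :
    ∃ (D : ℕ) (φ : A), 1 ≤ D ∧
      cost φ D ≥ (1 + ((B : ℝ) - 1) / (k : ℝ)) * min (D : ℝ) (B : ℝ) := by
  set D₀ := B + k with hD0
  set φ := adv D₀ with hφ
  have hBpos : (0:ℝ) < B := by exact_mod_cast hB
  have hkpos : (0:ℝ) < k := by exact_mod_cast hk1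
  have htr := htrusted D₀ (by omega)
  have hmin : min (D₀ : ℝ) (B : ℝ) = (B : ℝ) := by
    apply min_eq_right
    have : (B : ℝ) ≤ (D₀ : ℝ) := by exact_mod_cast Nat.le_add_right B k
    exact this
  have hrhs : (1 + ((k : ℝ) - 1) / (B : ℝ)) * (B : ℝ) = (B : ℝ) + (k : ℝ) - 1 := by
    field_simp; ring
  rw [hmin, hrhs] at htr
  rcases lt_or_ge ((D₀ : ℕ∞)) (j φ) with h | h
  · exfalso
    have hc := hcost_rent φ D₀ h
    rw [hc] at htr
    have : (D₀ : ℝ) = (B : ℝ) + (k : ℝ) := by push_cast [hD0]; ring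
    linarith
  · obtain ⟨n, hn, hnD⟩ := WithTop.le_coe_iff.mp h
    have hc := hcost_buy φ D₀ n hn hnD
    rw [hc] at htr
    have hnk : (n : ℝ) ≤ (k : ℝ) := by linarith
    have hnk' : n ≤ k := by exact_mod_cast hnk
    have hn1 : 1 ≤ n := by
      have := hj φ
      rw [hn] at this
      rcases Nat.eq_zero_or_pos n with h0 | h0
      · subst h0; simp at this; exact absurd (ENat.one_le_iff_ne_zero.mp this) (fun h => h rfl)
      · exact h0
    refine ⟨n, φ, hn1, ?_⟩
    have hcn := hcost_buy φ n n hn le_rfl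
    have hminn : min (n : ℝ) (B : ℝ) = (n : ℝ) := by
      apply min_eq_left
      exact_mod_cast hnk'.trans hkB
    rw [hcn, hminn, ge_iff_le]
    have h1 : (1:ℝ) ≤ n := by exact_mod_cast hn1
    have h1B : (1:ℝ) ≤ B := by exact_mod_cast hB
    rw [show (1 + ((B:ℝ) - 1) / k) * n = ((n:ℝ) * k + (B - 1) * n) / k by
      field_simp, div_le_iff₀ hkpos]
    nlinarith [mul_nonneg (sub_nonneg.mpr h1B) (sub_nonneg.mpr hnk)]
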